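/- arXiv:1508.00389 — 2 statements merged into one kernel-verified Lean document; each statement's English description precedes it below -/
import Mathlib

section
/- Let A and B be C*-algebras and let φ : A → B be a completely positive map that factors through a matrix algebra Mₙ(ℂ) via completely positive maps. Then for any a₁,…,aₙ ∈ A and b₁,…,bₙ ∈ B, the map a ↦ Σᵢⱼ bᵢ* φ(aᵢ* a aⱼ) bⱼ is completely positive and also factors through a matrix algebra via completely positive maps. -/
noncomputable section

open Filter Topology TopologicalSpace

/-- An element of the form `y⋆y`; in a C⋆-algebra this characterises positivity. -/
def IsPosElem {A : Type*} [Mul A] [Star A] (x : A) : Prop := ∃ y : A, x = star y * y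

/-- A linear map between (not necessarily unital) complex ⋆-algebras is completely positive iff
all matrix combinations `∑ᵢⱼ bᵢ⋆ φ(aᵢ⋆ aⱼ) bⱼ` are positive. -/
def IsCPMap {A B : Type*} [NonUnitalRing A] [StarRing A] [Module ℂ A]
    [NonUnitalRing B] [StarRing B] [Module ℂ B] (φ : A →ₗ[ℂ] B) : Prop :=
  ∀ (n : ℕ) (a : Fin n → A) (b : Fin n → B),
    IsPosElem (∑ i, ∑ j, star (b i) * φ (star (a i) * a j) * b j)

/-- A completely positive map is factorable if it factors through a matrix algebra by
completely positive maps. -/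
def IsFactorable {A B : Type*} [NonUnitalRing A] [StarRing A] [Module ℂ A]
    [NonUnitalRing B] [StarRing B] [Module ℂ B] (φ : A →ₗ[ℂ] B) : Prop :=
  ∃ (k : ℕ) (ψ : A →ₗ[ℂ] Matrix (Fin k) (Fin k) ℂ) (χ : Matrix (Fin k) (Fin k) ℂ →ₗ[ℂ] B),
    IsCPMap ψ ∧ IsCPMap χ ∧ φ = χ ∘ₗ ψ

/-- A map is nuclear if it is a point-norm limit of factorable completely positive maps. -/
def IsNuclearMap {A B : Type*} [NonUnitalNormedRing A] [StarRing A] [Module ℂ A]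
    [NonUnitalNormedRing B] [StarRing B] [Module ℂ B] (φ : A →ₗ[ℂ] B) : Prop :=
  ∀ ε : ℝ, 0 < ε → ∀ s : Finset A, ∃ ψ : A →ₗ[ℂ] B,
    IsFactorable ψ ∧ ∀ a ∈ s, ‖φ a - ψ a‖ < ε

/-- A closed two-sided ideal of a normed complex algebra. -/
structure ClosedIdeal (A : Type*) [NonUnitalNormedRing A] [Module ℂ A] where
  carrier : Set A
  zero_mem' : (0 : A) ∈ carrier
  add_mem' : ∀ {x y : A}, x ∈ carrier → y ∈ carrier → x + y ∈ carrier
  smul_mem' : ∀ (c : ℂ) {x : A}, x ∈ carrier → c • x ∈ carrier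
  mul_mem_left' : ∀ (a : A) {x : A}, x ∈ carrier → a * x ∈ carrier
  mul_mem_right' : ∀ (a : A) {x : A}, x ∈ carrier → x * a ∈ carrier
  isClosed' : IsClosed carrier

instance {A : Type*} [NonUnitalNormedRing A] [Module ℂ A] : SetLike (ClosedIdeal A) A where
  coe := ClosedIdeal.carrier
  coe_injective := by intro S T h; cases S; cases T; congr

/-- The smallest closed two-sided ideal containing a given set. -/
def ClosedIdeal.generated {A : Type*} [NonUnitalNormedRing A] [Module ℂ A] (S : Set A) :
    ClosedIdeal A where
  carrier := ⋂ (I : ClosedIdeal A) (_ : S ⊆ I.carrier), I.carrier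
  zero_mem' := by simp only [Set.mem_iInter]; exact fun I _ => I.zero_mem'
  add_mem' := by
    intro x y hx hy
    simp only [Set.mem_iInter] at hx hy ⊢
    exact fun I hI => I.add_mem' (hx I hI) (hy I hI)
  smul_mem' := by
    intro c x hx
    simp only [Set.mem_iInter] at hx ⊢
    exact fun I hI => I.smul_mem' c (hx I hI)
  mul_mem_left' := by
    intro a x hx
    simp only [Set.mem_iInter] at hx ⊢
    exact fun I hI => I.mul_mem_left' a (hx I hI)
  mul_mem_right' := by
    intro a x hx
    simp only [Set.mem_iInter] at hx ⊢
    exact fun I hI => I.mul_mem_right' a (hx I hI)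
  isClosed' := isClosed_iInter fun I => isClosed_iInter fun _ => I.isClosed'

/-- A C⋆-algebra is exact if it admits a faithful nuclear representation on a Hilbert space. -/
def IsExactCStarAlgebra (A : Type u) [NonUnitalCStarAlgebra A] : Prop :=
  ∃ (H : Type u) (_ : NormedAddCommGroup H) (_ : InnerProductSpace ℂ H) (_ : CompleteSpace H)
    (π : A →ₗ[ℂ] (H →L[ℂ] H)),
    (∀ x y, π (x * y) = π x * π y) ∧ (∀ x, π (star x) = star (π x)) ∧
      Function.Injective π ∧ IsNuclearMap π

/-- A C⋆-algebra is σ-unital if it contains a strictly positive element. -/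
def IsSigmaUnital (A : Type*) [NonUnitalNormedRing A] [StarRing A] [Module ℂ A] : Prop :=
  ∃ h : A, IsPosElem h ∧ ∀ a : A, a ∈ closure {x : A | ∃ b : A, x = h * b}

/-- A realisation of the spatial tensor product of two C⋆-algebras: a C⋆-algebra `T` together
with a bilinear map `ι` with dense linear span, multiplicative and ⋆-preserving on elementary
tensors, and admitting slice maps in both variables. -/
structure CStarTensor (B D T : Type*) [NonUnitalCStarAlgebra B] [NonUnitalCStarAlgebra D]
    [NonUnitalCStarAlgebra T] where
  ι : B →ₗ[ℂ] D →ₗ[ℂ] T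
  ι_mul : ∀ (b b' : B) (d d' : D), ι b d * ι b' d' = ι (b * b') (d * d')
  ι_star : ∀ (b : B) (d : D), star (ι b d) = ι (star b) (star d)
  denseSpan : Dense (Submodule.span ℂ {t : T | ∃ b d, t = ι b d} : Set T)
  sliceR : (D →L[ℂ] ℂ) → (T →L[ℂ] B)
  sliceR_apply : ∀ (η : D →L[ℂ] ℂ) (b : B) (d : D), sliceR η (ι b d) = η d • b
  sliceL : (B →L[ℂ] ℂ) → (T →L[ℂ] D)
  sliceL_apply : ∀ (f : B →L[ℂ] ℂ) (b : B) (d : D), sliceL f (ι b d) = f b • d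

/-- The ideal `J ⊗ D` of the tensor product: the closed two-sided ideal generated by elementary
tensors with first factor in `J`. -/
def CStarTensor.tensorIdeal {B D T : Type*} [NonUnitalCStarAlgebra B] [NonUnitalCStarAlgebra D]
    [NonUnitalCStarAlgebra T] (τ : CStarTensor B D T) (J : ClosedIdeal B) : ClosedIdeal T :=
  ClosedIdeal.generated {t : T | ∃ b ∈ J.carrier, ∃ d : D, t = τ.ι b d}

section auxlemmas
open Matrix
open scoped ComplexOrder

section helpers

lemma quad_expand {N : ℕ} (Z : Matrix (Fin N) (Fin N) ℂ) (v₁ v₂ : Fin N → ℂ) :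
    star v₁ ⬝ᵥ Z *ᵥ v₂ = ∑ α, ∑ β, (starRingEnd ℂ) (v₁ α) * Z α β * v₂ β := by
  simp [dotProduct, Matrix.mulVec, Finset.mul_sum, mul_assoc]

lemma sandwich_qf {N : ℕ} (Z P Q : Matrix (Fin N) (Fin N) ℂ) (v : Fin N → ℂ) :
    star v ⬝ᵥ ((star P * Z * Q) *ᵥ v) = star (P *ᵥ v) ⬝ᵥ (Z *ᵥ (Q *ᵥ v)) := by
  rw [← Matrix.mulVec_mulVec, ← Matrix.mulVec_mulVec, Matrix.star_eq_conjTranspose,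
    Matrix.dotProduct_mulVec, ← Matrix.star_mulVec]

lemma sum_qf {N : ℕ} {ι : Type*} [Fintype ι] (F : ι → Matrix (Fin N) (Fin N) ℂ)
    (v w : Fin N → ℂ) :
    star v ⬝ᵥ ((∑ i, F i) *ᵥ w) = ∑ i, star v ⬝ᵥ (F i *ᵥ w) := by
  simp only [Matrix.mulVec, dotProduct, Matrix.sum_apply, Finset.sum_mul,
    Finset.mul_sum]
  rw [show (∑ α : Fin N, ∑ β : Fin N, ∑ i : ι, star v α * (F i α β * w β))
      = ∑ α : Fin N, ∑ i : ι, ∑ β : Fin N, star v α * (F i α β * w β) from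
    Finset.sum_congr rfl fun α _ => Finset.sum_comm]
  exact Finset.sum_comm

lemma isPosElem_matrix_iff {N : ℕ} (M : Matrix (Fin N) (Fin N) ℂ) :
    IsPosElem M ↔ M.PosSemidef := by
  open scoped MatrixOrder in
  rw [← Matrix.nonneg_iff_posSemidef, CStarAlgebra.nonneg_iff_eq_star_mul_self]
  constructor <;> rintro ⟨y, h⟩ <;>
    exact ⟨y, by simpa [Matrix.star_eq_conjTranspose] using h⟩

open Unitization in
lemma isPosElem_add {B : Type*} [NonUnitalCStarAlgebra B] {x z : B}
    (hx : IsPosElem x) (hz : IsPosElem z) : IsPosElem (x + z) := by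
  obtain ⟨y, rfl⟩ := hx
  obtain ⟨w, rfl⟩ := hz
  set u : B := star y * y + star w * w with hu
  have hsa : IsSelfAdjoint u := by
    simp [hu, _root_.IsSelfAdjoint, star_add, StarMul.star_mul, mul_assoc]
  have hspec : quasispectrum ℝ u ⊆ Set.Ici 0 := by
    letI := CStarAlgebra.spectralOrder (Unitization ℂ B)
    haveI := CStarAlgebra.spectralOrderedRing (Unitization ℂ B)
    have h1 : (0 : Unitization ℂ B) ≤ (u : Unitization ℂ B) := by
      have e1 : (u : Unitization ℂ B)
          = star (y : Unitization ℂ B) * (y : Unitization ℂ B)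
            + star (w : Unitization ℂ B) * (w : Unitization ℂ B) := by
        simp [hu, Unitization.inr_add, Unitization.inr_mul, Unitization.inr_star]
      rw [e1]
      exact add_nonneg (star_mul_self_nonneg _) (star_mul_self_nonneg _)
    rw [Unitization.quasispectrum_eq_spectrum_inr' ℝ ℂ u]
    intro t ht
    exact spectrum_nonneg_of_nonneg h1 ht
  set s : B := cfcₙ (fun t : ℝ => Real.sqrt t) u with hs
  have hssa : IsSelfAdjoint s := cfcₙ_predicate _ u
  have hmul : s * s = u := by
    rw [hs, ← cfcₙ_mul _ _ u (by fun_prop) (by simp)]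
    have h2 : cfcₙ (fun t : ℝ => Real.sqrt t * Real.sqrt t) u = cfcₙ (id : ℝ → ℝ) u :=
      cfcₙ_congr (fun t ht => Real.mul_self_sqrt (hspec ht))
    rw [h2, cfcₙ_id ℝ u]
  exact ⟨s, by rw [hssa.star_eq, hmul]⟩

lemma isPosElem_zero {B : Type*} [NonUnitalRing B] [StarRing B] : IsPosElem (0 : B) :=
  ⟨0, by simp⟩

lemma isPosElem_sum {B : Type*} [NonUnitalCStarAlgebra B] {ι : Type*} (s : Finset ι)
    (f : ι → B) (h : ∀ i ∈ s, IsPosElem (f i)) : IsPosElem (∑ i ∈ s, f i) :=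
  Finset.sum_induction f _ (fun _ _ => isPosElem_add) isPosElem_zero h

end helpers

section algebraic

variable {A B : Type*} [NonUnitalRing A] [StarRing A] [Module ℂ A]
    [NonUnitalRing B] [StarRing B] [Module ℂ B]

lemma cp_sum {φ : A →ₗ[ℂ] B} (hφ : IsCPMap φ) {ι : Type*} [Fintype ι]
    (a : ι → A) (b : ι → B) :
    IsPosElem (∑ i, ∑ j, star (b i) * φ (star (a i) * a j) * b j) := by
  classical
  let e := (Fintype.equivFin ι).symm
  have h := hφ (Fintype.card ι) (a ∘ e) (b ∘ e)
  have h2 : (∑ i, ∑ j, star ((b ∘ e) i) * φ (star ((a ∘ e) i) * (a ∘ e) j) * (b ∘ e) j)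
      = ∑ i, ∑ j, star (b i) * φ (star (a i) * a j) * b j := by
    rw [← Equiv.sum_comp e (fun i => ∑ j, star (b i) * φ (star (a i) * a j) * b j)]
    refine Finset.sum_congr rfl fun i _ => ?_
    rw [← Equiv.sum_comp e (fun j => star (b (e i)) * φ (star (a (e i)) * a j) * b j)]
    rfl
  rwa [h2] at h

lemma cp_sandwich {φ : A →ₗ[ℂ] B} (hφ : IsCPMap φ) {n : ℕ} (a : Fin n → A) (b : Fin n → B)
    (Ψ : A →ₗ[ℂ] B)
    (hΨ : ∀ x : A, Ψ x = ∑ i, ∑ j, star (b i) * φ (star (a i) * x * a j) * b j) :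
    IsCPMap Ψ := by
  intro m x c
  have hterm : ∀ (p q : Fin m) (i j : Fin n),
      star (c p) * (star (b i) * φ (star (a i) * (star (x p) * x q) * a j) * b j) * c q
        = star (b i * c p) * φ (star (x p * a i) * (x q * a j)) * (b j * c q) := by
    intro p q i j
    have harg : star (a i) * (star (x p) * x q) * a j = star (x p * a i) * (x q * a j) := by
      simp [StarMul.star_mul, mul_assoc]
    rw [harg, StarMul.star_mul, StarMul.star_mul]
    simp [mul_assoc]
  have key : (∑ p, ∑ q, star (c p) * Ψ (star (x p) * x q) * c q)
      = ∑ pi : Fin m × Fin n, ∑ qj : Fin m × Fin n,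
          star (b pi.2 * c pi.1) *
            φ (star (x pi.1 * a pi.2) * (x qj.1 * a qj.2)) * (b qj.2 * c qj.1) := by
    simp only [Fintype.sum_prod_type]
    calc (∑ p, ∑ q, star (c p) * Ψ (star (x p) * x q) * c q)
        = ∑ p, ∑ q, ∑ i, ∑ j,
            star (b i * c p) * φ (star (x p * a i) * (x q * a j)) * (b j * c q) := by
          refine Finset.sum_congr rfl fun p _ => Finset.sum_congr rfl fun q _ => ?_
          rw [hΨ, Finset.mul_sum, Finset.sum_mul]
          refine Finset.sum_congr rfl fun i _ => ?_
          rw [Finset.mul_sum, Finset.sum_mul]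
          exact Finset.sum_congr rfl fun j _ => hterm p q i j
      _ = ∑ p, ∑ i, ∑ q, ∑ j,
            star (b i * c p) * φ (star (x p * a i) * (x q * a j)) * (b j * c q) :=
          Finset.sum_congr rfl fun p _ => Finset.sum_comm
  rw [key]
  exact cp_sum hφ _ _

end algebraic

section matrixcp

variable {A : Type*} [NonUnitalRing A] [StarRing A] [Module ℂ A] [StarModule ℂ A]
  [IsScalarTower ℂ A A] [SMulCommClass ℂ A A] {k : ℕ}

omit [StarModule ℂ A] [IsScalarTower ℂ A A] [SMulCommClass ℂ A A] in
lemma cp_hermself {ψ : A →ₗ[ℂ] Matrix (Fin k) (Fin k) ℂ} (hψ : IsCPMap ψ) (w : A) :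
    (ψ (star w * w))ᴴ = ψ (star w * w) := by
  have h := hψ 1 ![w] ![1]
  simp only [Fin.sum_univ_one, Matrix.cons_val_zero, star_one, one_mul, mul_one] at h
  obtain ⟨y, hy⟩ := h
  rw [hy]
  simp [Matrix.star_eq_conjTranspose, Matrix.conjTranspose_mul]

lemma cp_star {ψ : A →ₗ[ℂ] Matrix (Fin k) (Fin k) ℂ} (hψ : IsCPMap ψ) (u v : A) :
    ψ (star u * v) = (ψ (star v * u))ᴴ := by
  set P := ψ (star u * v) with hP
  set Q := ψ (star v * u) with hQ
  have hu := cp_hermself hψ u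
  have hv := cp_hermself hψ v
  have h1 : Pᴴ + Qᴴ = P + Q := by
    have h := cp_hermself hψ (u + v)
    have e : star (u + v) * (u + v)
        = (star u * u + star v * v) + (star u * v + star v * u) := by
      rw [star_add]; noncomm_ring
    rw [e] at h
    simp only [map_add, conjTranspose_add, hu, hv, ← hP, ← hQ] at h
    exact add_left_cancel h
  have h2 : Pᴴ - Qᴴ = Q - P := by
    have h := cp_hermself hψ (u + Complex.I • v)
    have e : star (u + Complex.I • v) * (u + Complex.I • v)
        = (star u * u + star v * v)
          + (Complex.I • (star u * v) - Complex.I • (star v * u)) := by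
      rw [star_add, star_smul, Complex.star_def, Complex.conj_I]
      simp only [add_mul, mul_add, smul_mul_assoc, mul_smul_comm]
      match_scalars <;> simp [Complex.I_sq]
    rw [e] at h
    simp only [map_add, map_sub, LinearMap.map_smul, conjTranspose_add, conjTranspose_sub,
      conjTranspose_smul, Complex.star_def, Complex.conj_I, hu, hv, neg_smul, ← hP, ← hQ] at h
    have h' := add_left_cancel h
    have h'' := congrArg (fun M => Complex.I • M) h'
    simp only [smul_sub, smul_neg, smul_smul, Complex.I_mul_I, neg_smul, one_smul,
      neg_neg] at h''
    linear_combination (norm := module) h''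
  have key : (2 : ℂ) • Qᴴ = (2 : ℂ) • P := by
    linear_combination (norm := module) h1 - h2
  exact (smul_right_injective (Matrix (Fin k) (Fin k) ℂ) (two_ne_zero (α := ℂ)) key).symm

end matrixcp
section psi

variable {A : Type*} [NonUnitalRing A] [StarRing A] [Module ℂ A] [StarModule ℂ A]
  [IsScalarTower ℂ A A] [SMulCommClass ℂ A A] {k n : ℕ}

lemma cp_psi' {ψ : A →ₗ[ℂ] Matrix (Fin k) (Fin k) ℂ} (hψ : IsCPMap ψ) (a : Fin n → A)
    (ψ' : A →ₗ[ℂ] Matrix (Fin (n * k)) (Fin (n * k)) ℂ)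
    (hψ'ap : ∀ (x : A) (α β : Fin (n * k)),
      ψ' x α β = ψ (star (a (finProdFinEquiv.symm α).1) * x * a (finProdFinEquiv.symm β).1)
        (finProdFinEquiv.symm α).2 (finProdFinEquiv.symm β).2) :
    IsCPMap ψ' := by
  intro m x C
  rw [isPosElem_matrix_iff]
  have hψ'star : ∀ y : A, (ψ' y)ᴴ = ψ' (star y) := by
    intro y
    ext α β
    rw [conjTranspose_apply, hψ'ap, hψ'ap]
    have h := cp_star hψ (star y * a ((finProdFinEquiv.symm β).1))
      (a ((finProdFinEquiv.symm α).1))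
    rw [StarMul.star_mul, star_star] at h
    rw [h, conjTranspose_apply, star_star, mul_assoc]
  rw [Matrix.posSemidef_iff_dotProduct_mulVec]
  constructor
  · show _ = _
    rw [Matrix.conjTranspose_sum]
    have hterm : ∀ p q : Fin m,
        (star (C p) * ψ' (star (x p) * x q) * C q)ᴴ
          = star (C q) * ψ' (star (x q) * x p) * C p := by
      intro p q
      simp only [Matrix.star_eq_conjTranspose, conjTranspose_mul,
        conjTranspose_conjTranspose, hψ'star, StarMul.star_mul, star_star, mul_assoc]
    calc (∑ p, (∑ q, star (C p) * ψ' (star (x p) * x q) * C q)ᴴ)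
        = ∑ p, ∑ q, star (C q) * ψ' (star (x q) * x p) * C p := by
          refine Finset.sum_congr rfl fun p _ => ?_
          rw [Matrix.conjTranspose_sum]
          exact Finset.sum_congr rfl fun q _ => hterm p q
      _ = ∑ p, ∑ q, star (C p) * ψ' (star (x p) * x q) * C q := Finset.sum_comm
  · intro v
    set w : Fin m → Fin (n * k) → ℂ := fun p => C p *ᵥ v with hw
    set u : Fin m → Fin n → Fin k → ℂ := fun p i s => w p (finProdFinEquiv (i, s)) with hu
    have claimA : star v ⬝ᵥ ((∑ p, ∑ q, star (C p) * ψ' (star (x p) * x q) * C q) *ᵥ v)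
        = ∑ p, ∑ q, ∑ i, ∑ j,
            star (u p i) ⬝ᵥ (ψ (star (x p * a i) * (x q * a j)) *ᵥ u q j) := by
      rw [sum_qf]
      refine Finset.sum_congr rfl fun p _ => ?_
      rw [sum_qf]
      refine Finset.sum_congr rfl fun q _ => ?_
      rw [sandwich_qf, quad_expand]
      rw [← Equiv.sum_comp finProdFinEquiv
        (fun α => ∑ β, (starRingEnd ℂ) ((C p *ᵥ v) α) * ψ' (star (x p) * x q) α β
          * (C q *ᵥ v) β)]
      rw [Fintype.sum_prod_type]
      refine Finset.sum_congr rfl fun i _ => ?_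
      have hL : ∀ s : Fin k,
          (∑ β : Fin (n * k),
            (starRingEnd ℂ) ((C p *ᵥ v) (finProdFinEquiv (i, s)))
              * ψ' (star (x p) * x q) (finProdFinEquiv (i, s)) β * (C q *ᵥ v) β)
          = ∑ j : Fin n, ∑ t : Fin k,
              (starRingEnd ℂ) (u p i s)
                * ψ (star (x p * a i) * (x q * a j)) s t * u q j t := by
        intro s
        rw [← Equiv.sum_comp finProdFinEquiv
          (fun β => (starRingEnd ℂ) ((C p *ᵥ v) (finProdFinEquiv (i, s)))
            * ψ' (star (x p) * x q) (finProdFinEquiv (i, s)) β * (C q *ᵥ v) β),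
          Fintype.sum_prod_type]
        refine Finset.sum_congr rfl fun j _ => Finset.sum_congr rfl fun t _ => ?_
        rw [hψ'ap]
        simp only [Equiv.symm_apply_apply, hu, hw]
        congr 3
        simp [StarMul.star_mul, mul_assoc]
      calc (∑ s : Fin k, ∑ β : Fin (n * k),
            (starRingEnd ℂ) ((C p *ᵥ v) (finProdFinEquiv (i, s)))
              * ψ' (star (x p) * x q) (finProdFinEquiv (i, s)) β * (C q *ᵥ v) β)
          = ∑ s : Fin k, ∑ j : Fin n, ∑ t : Fin k,
              (starRingEnd ℂ) (u p i s)
                * ψ (star (x p * a i) * (x q * a j)) s t * u q j t :=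
            Finset.sum_congr rfl fun s _ => hL s
        _ = ∑ j : Fin n, ∑ s : Fin k, ∑ t : Fin k,
              (starRingEnd ℂ) (u p i s)
                * ψ (star (x p * a i) * (x q * a j)) s t * u q j t := Finset.sum_comm
        _ = ∑ j : Fin n, star (u p i) ⬝ᵥ ψ (star (x p * a i) * (x q * a j)) *ᵥ u q j :=
            Finset.sum_congr rfl fun j _ => (quad_expand _ _ _).symm
    rw [claimA]
    rcases Nat.eq_zero_or_pos k with hk | hk
    · subst hk
      simp [dotProduct]
    · set t0 : Fin k := ⟨0, hk⟩ with ht0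
      set E : Fin m × Fin n → Matrix (Fin k) (Fin k) ℂ :=
        fun pi => Matrix.of fun s t => if t = t0 then u pi.1 pi.2 s else 0 with hE
      set z : Fin k → ℂ := fun t => if t = t0 then 1 else 0 with hz
      have hEz : ∀ pi : Fin m × Fin n, E pi *ᵥ z = u pi.1 pi.2 := by
        intro pi
        ext s
        simp [hE, hz, Matrix.mulVec, dotProduct, ite_mul, mul_ite]
      have hT := cp_sum hψ (ι := Fin m × Fin n)
        (fun pi => x pi.1 * a pi.2) (fun pi => E pi)
      rw [isPosElem_matrix_iff] at hT
      have hqf := hT.dotProduct_mulVec_nonneg z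
      have hval : star z ⬝ᵥ ((∑ pi : Fin m × Fin n, ∑ qj : Fin m × Fin n,
            star (E pi) * ψ (star (x pi.1 * a pi.2) * (x qj.1 * a qj.2)) * E qj) *ᵥ z)
          = ∑ pi : Fin m × Fin n, ∑ qj : Fin m × Fin n,
              star (u pi.1 pi.2) ⬝ᵥ
                (ψ (star (x pi.1 * a pi.2) * (x qj.1 * a qj.2)) *ᵥ u qj.1 qj.2) := by
        rw [sum_qf]
        refine Finset.sum_congr rfl fun pi _ => ?_
        rw [sum_qf]
        refine Finset.sum_congr rfl fun qj _ => ?_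
        rw [sandwich_qf, hEz, hEz]
      rw [hval] at hqf
      have hre : (∑ p, ∑ q, ∑ i, ∑ j,
            star (u p i) ⬝ᵥ (ψ (star (x p * a i) * (x q * a j)) *ᵥ u q j))
          = ∑ pi : Fin m × Fin n, ∑ qj : Fin m × Fin n,
              star (u pi.1 pi.2) ⬝ᵥ
                (ψ (star (x pi.1 * a pi.2) * (x qj.1 * a qj.2)) *ᵥ u qj.1 qj.2) := by
        simp only [Fintype.sum_prod_type]
        exact Finset.sum_congr rfl fun p _ => Finset.sum_comm
      rw [hre]
      exact hqf

end psi

section chi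

variable {B : Type*} [NonUnitalCStarAlgebra B] {k n : ℕ}

lemma cp_chi' {χ : Matrix (Fin k) (Fin k) ℂ →ₗ[ℂ] B} (hχ : IsCPMap χ) (b : Fin n → B)
    (χ' : Matrix (Fin (n * k)) (Fin (n * k)) ℂ →ₗ[ℂ] B)
    (hχ'ap : ∀ M : Matrix (Fin (n * k)) (Fin (n * k)) ℂ,
      χ' M = ∑ i, ∑ j, star (b i) *
        χ (Matrix.of fun s t => M (finProdFinEquiv (i, s)) (finProdFinEquiv (j, t))) * b j) :
    IsCPMap χ' := by
  intro m M c
  set g : Fin n → Fin n → Fin m → Matrix (Fin k) (Fin k) ℂ :=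
    fun r i p => Matrix.of fun s t => M p (finProdFinEquiv (r, s)) (finProdFinEquiv (i, t))
    with hg
  have hblk : ∀ (i j : Fin n) (p q : Fin m),
      (Matrix.of fun s t =>
          (star (M p) * M q) (finProdFinEquiv (i, s)) (finProdFinEquiv (j, t)))
        = ∑ r : Fin n, star (g r i p) * g r j q := by
    intro i j p q
    ext s t
    simp only [Matrix.of_apply, Matrix.mul_apply, Matrix.sum_apply,
      Matrix.star_eq_conjTranspose, Matrix.conjTranspose_apply, hg]
    rw [← Equiv.sum_comp finProdFinEquiv
      (fun γ => star (M p γ (finProdFinEquiv (i, s))) * M q γ (finProdFinEquiv (j, t))),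
      Fintype.sum_prod_type]
  have htm : ∀ (p q : Fin m) (i j r : Fin n),
      star (c p) * (star (b i) * χ (star (g r i p) * g r j q) * b j) * c q
        = star (b i * c p) * χ (star (g r i p) * g r j q) * (b j * c q) := by
    intro p q i j r
    rw [StarMul.star_mul]
    simp [mul_assoc]
  have key : (∑ p, ∑ q, star (c p) * χ' (star (M p) * M q) * c q)
      = ∑ r : Fin n, ∑ pi : Fin m × Fin n, ∑ qj : Fin m × Fin n,
          star (b pi.2 * c pi.1) * χ (star (g r pi.2 pi.1) * g r qj.2 qj.1)
            * (b qj.2 * c qj.1) := by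
    calc (∑ p, ∑ q, star (c p) * χ' (star (M p) * M q) * c q)
        = ∑ p, ∑ q, ∑ i, ∑ j, ∑ r : Fin n,
            star (b i * c p) * χ (star (g r i p) * g r j q) * (b j * c q) := by
          refine Finset.sum_congr rfl fun p _ => Finset.sum_congr rfl fun q _ => ?_
          rw [hχ'ap, Finset.mul_sum, Finset.sum_mul]
          refine Finset.sum_congr rfl fun i _ => ?_
          rw [Finset.mul_sum, Finset.sum_mul]
          refine Finset.sum_congr rfl fun j _ => ?_
          rw [hblk i j p q, map_sum, Finset.mul_sum, Finset.sum_mul, Finset.mul_sum,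
            Finset.sum_mul]
          exact Finset.sum_congr rfl fun r _ => htm p q i j r
      _ = ∑ p, ∑ q, ∑ r : Fin n, ∑ i, ∑ j,
            star (b i * c p) * χ (star (g r i p) * g r j q) * (b j * c q) := by
          refine Finset.sum_congr rfl fun p _ => Finset.sum_congr rfl fun q _ => ?_
          rw [show (∑ i : Fin n, ∑ j : Fin n, ∑ r : Fin n,
              star (b i * c p) * χ (star (g r i p) * g r j q) * (b j * c q))
            = ∑ i : Fin n, ∑ r : Fin n, ∑ j : Fin n,
              star (b i * c p) * χ (star (g r i p) * g r j q) * (b j * c q) from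
            Finset.sum_congr rfl fun i _ => Finset.sum_comm]
          exact Finset.sum_comm
      _ = ∑ r : Fin n, ∑ p, ∑ q, ∑ i, ∑ j,
            star (b i * c p) * χ (star (g r i p) * g r j q) * (b j * c q) := by
          rw [show (∑ p, ∑ q, ∑ r : Fin n, ∑ i, ∑ j,
              star (b i * c p) * χ (star (g r i p) * g r j q) * (b j * c q))
            = ∑ p, ∑ r : Fin n, ∑ q, ∑ i, ∑ j,
              star (b i * c p) * χ (star (g r i p) * g r j q) * (b j * c q) from
            Finset.sum_congr rfl fun p _ => Finset.sum_comm]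
          exact Finset.sum_comm
      _ = ∑ r : Fin n, ∑ pi : Fin m × Fin n, ∑ qj : Fin m × Fin n,
          star (b pi.2 * c pi.1) * χ (star (g r pi.2 pi.1) * g r qj.2 qj.1)
            * (b qj.2 * c qj.1) := by
          refine Finset.sum_congr rfl fun r _ => ?_
          simp only [Fintype.sum_prod_type]
          exact Finset.sum_congr rfl fun p _ => Finset.sum_comm
  rw [key]
  exact isPosElem_sum _ _ fun r _ =>
    cp_sum hχ (fun pi : Fin m × Fin n => g r pi.2 pi.1)
      (fun pi : Fin m × Fin n => b pi.2 * c pi.1)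

end chi


end auxlemmas

/-- If `φ` is a factorable completely positive map, then for any `a₁,…,aₙ ∈ A`, `b₁,…,bₙ ∈ B`,
the map `x ↦ ∑ᵢⱼ bᵢ⋆ φ(aᵢ⋆ x aⱼ) bⱼ` is completely positive and factorable. -/
theorem stmt_1 {A B : Type*} [NonUnitalCStarAlgebra A] [NonUnitalCStarAlgebra B]
    (φ : A →ₗ[ℂ] B) (hφcp : IsCPMap φ) (hφ : IsFactorable φ)
    (n : ℕ) (a : Fin n → A) (b : Fin n → B) (Ψ : A →ₗ[ℂ] B)
    (hΨ : ∀ x : A, Ψ x = ∑ i, ∑ j, star (b i) * φ (star (a i) * x * a j) * b j) :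
    IsCPMap Ψ ∧ IsFactorable Ψ := by
  refine ⟨cp_sandwich hφcp a b Ψ hΨ, ?_⟩
  obtain ⟨k, ψ, χ, hψcp, hχcp, hfac⟩ := hφ
  set ψ' : A →ₗ[ℂ] Matrix (Fin (n * k)) (Fin (n * k)) ℂ :=
    { toFun := fun x => Matrix.of fun α β =>
        ψ (star (a (finProdFinEquiv.symm α).1) * x * a (finProdFinEquiv.symm β).1)
          (finProdFinEquiv.symm α).2 (finProdFinEquiv.symm β).2,
      map_add' := by
        intro x y
        ext α β
        simp [mul_add, add_mul, map_add]
      map_smul' := by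
        intro r x
        ext α β
        simp [mul_smul_comm, smul_mul_assoc] } with hψ'def
  set χ' : Matrix (Fin (n * k)) (Fin (n * k)) ℂ →ₗ[ℂ] B :=
    { toFun := fun M => ∑ i, ∑ j, star (b i) *
        χ (Matrix.of fun s t => M (finProdFinEquiv (i, s)) (finProdFinEquiv (j, t))) * b j,
      map_add' := by
        intro M N
        rw [← Finset.sum_add_distrib]
        refine Finset.sum_congr rfl fun i _ => ?_
        rw [← Finset.sum_add_distrib]
        refine Finset.sum_congr rfl fun j _ => ?_
        have : (Matrix.of fun s t => (M + N) (finProdFinEquiv (i, s)) (finProdFinEquiv (j, t)))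
            = (Matrix.of fun s t => M (finProdFinEquiv (i, s)) (finProdFinEquiv (j, t)))
              + (Matrix.of fun s t => N (finProdFinEquiv (i, s)) (finProdFinEquiv (j, t))) := by
          ext s t; simp
        rw [this, map_add, mul_add, add_mul]
      map_smul' := by
        intro r M
        simp only [RingHom.id_apply]
        rw [Finset.smul_sum]
        refine Finset.sum_congr rfl fun i _ => ?_
        rw [Finset.smul_sum]
        refine Finset.sum_congr rfl fun j _ => ?_
        have : (Matrix.of fun s t => (r • M) (finProdFinEquiv (i, s)) (finProdFinEquiv (j, t)))
            = r • (Matrix.of fun s t => M (finProdFinEquiv (i, s)) (finProdFinEquiv (j, t))) := by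
          ext s t; simp
        rw [this, map_smul, mul_smul_comm, smul_mul_assoc] } with hχ'def
  refine ⟨n * k, ψ', χ', cp_psi' hψcp a ψ' (fun x α β => rfl),
    cp_chi' hχcp b χ' (fun M => rfl), ?_⟩
  ext x
  rw [LinearMap.comp_apply, hΨ]
  show _ = ∑ i, ∑ j, star (b i) *
      χ (Matrix.of fun s t => (ψ' x) (finProdFinEquiv (i, s)) (finProdFinEquiv (j, t))) * b j
  refine Finset.sum_congr rfl fun i _ => Finset.sum_congr rfl fun j _ => ?_
  have hblk : (Matrix.of fun s t => (ψ' x) (finProdFinEquiv (i, s)) (finProdFinEquiv (j, t)))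
      = ψ (star (a i) * x * a j) := by
    ext s t
    show ψ (star (a (finProdFinEquiv.symm (finProdFinEquiv (i, s))).1) * x
        * a (finProdFinEquiv.symm (finProdFinEquiv (j, t))).1)
        (finProdFinEquiv.symm (finProdFinEquiv (i, s))).2
        (finProdFinEquiv.symm (finProdFinEquiv (j, t))).2 = ψ (star (a i) * x * a j) s t
    rw [Equiv.symm_apply_apply, Equiv.symm_apply_apply]
  rw [hblk, hfac]
  rfl
end
end

section
/- Let B be a C*-algebra with an action of a topological space X, and let D be any C*-algebra. If the action of X on B is finitely upper semicontinuous (B(∅)=0 and B(U)+B(V)=B(U∪V) for open U,V), then the induced action U ↦ B(U)⊗D on the spatial tensor product B⊗D is also finitely upper semicontinuous. -/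
noncomputable section

open Filter Topology TopologicalSpace

section AuxCStar

variable {A : Type*} [NonUnitalCStarAlgebra A]


lemma real_bound_aux' {s : ℝ} (hs : 0 < s) (t : ℝ) (u : ℝ) (hu : u = |t|) :
    u * (s ^ 2) ^ 2 ≤ s / 2 * (t ^ 2 + s ^ 2) ^ 2 := by
  have hu0 : 0 ≤ u := hu ▸ abs_nonneg t
  have ht2 : t ^ 2 = u ^ 2 := by rw [hu, sq_abs]
  rw [ht2]
  nlinarith [mul_nonneg hs.le (mul_nonneg (sq_nonneg u) (sq_nonneg u)),
    mul_nonneg hs.le (mul_nonneg (sq_nonneg u) (sq_nonneg s)),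
    mul_nonneg (mul_nonneg hs.le (sq_nonneg s)) (sq_nonneg (u - s))]

lemma my_key_approx_aux {x : A} {s : ℝ} (hs : 0 < s) :
    ∃ e : A, (∃ c : A, e = (star x * x) * c) ∧ ‖x - x * e‖ * ‖x - x * e‖ ≤ s / 2 ∧
      ∀ a : A, ‖a - a * e‖ ≤ ‖a‖ := by
  obtain ⟨δ, hδ, hδ_def⟩ : ∃ δ : ℝ, 0 < δ ∧ δ = s ^ 2 := ⟨s ^ 2, by positivity, rfl⟩
  set b : A := star x * x with hb_def
  have hb : IsSelfAdjoint b := IsSelfAdjoint.star_mul_self x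
  have hpos : ∀ t : ℝ, 0 < t ^ 2 + δ := fun t => by positivity
  set g : ℝ → ℝ := fun t => t ^ 2 / (t ^ 2 + δ) with hg_def
  have hgc : Continuous g := by
    apply Continuous.div (by fun_prop) (by fun_prop)
    exact fun t => (hpos t).ne'
  have hg0 : g 0 = 0 := by simp [hg_def]
  have hgrange : ∀ t : ℝ, 0 ≤ g t ∧ g t ≤ 1 := by
    intro t
    constructor
    · positivity
    · rw [div_le_one (hpos t)]; linarith [hδ]
  set e : A := cfcₙ g b with he_def
  have he : IsSelfAdjoint e := cfcₙ_predicate g b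
  refine ⟨e, ?_, ?_, ?_⟩
  · -- e = b * c
    set h : ℝ → ℝ := fun t => t / (t ^ 2 + δ) with hh_def
    have hhc : Continuous h := by
      apply Continuous.div (by fun_prop) (by fun_prop)
      exact fun t => (hpos t).ne'
    refine ⟨cfcₙ h b, ?_⟩
    have : g = fun t => t * h t := by
      funext t; field_simp [hg_def, hh_def]; ring
    rw [he_def, this, cfcₙ_mul (fun t : ℝ => t) h b (hf := continuousOn_id)
      (hg := hhc.continuousOn), cfcₙ_id' ℝ b]
  · -- small on x
    have h1 : b * e = cfcₙ (fun t => t * g t) b := by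
      rw [cfcₙ_mul (fun t : ℝ => t) g b (hf := continuousOn_id) (hg := hgc.continuousOn),
        cfcₙ_id' ℝ b]
    have h2 : e * b = cfcₙ (fun t => g t * t) b := by
      rw [cfcₙ_mul g (fun t : ℝ => t) b (hf := hgc.continuousOn) (hg := continuousOn_id),
        cfcₙ_id' ℝ b]
    have h3 : e * (b * e) = cfcₙ (fun t => g t * (t * g t)) b := by
      rw [cfcₙ_mul g (fun t : ℝ => t * g t) b (hf := hgc.continuousOn)
        (hg := by fun_prop) (hg0 := by simp [hg0]), ← h1]
    have hexp : star (x - x * e) * (x - x * e) = (b - b * e) - (e * b - e * (b * e)) := by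
      rw [star_sub, star_mul, he.star_eq]
      simp only [hb_def]
      noncomm_ring
    have hfun : (fun t : ℝ => t * (1 - g t) ^ 2)
        = fun t => (t - t * g t) - (g t * t - g t * (t * g t)) := by
      funext t; ring
    have hc2 : star (x - x * e) * (x - x * e) = cfcₙ (fun t : ℝ => t * (1 - g t) ^ 2) b := by
      rw [hexp, hfun, cfcₙ_sub _ _ b (hf := by fun_prop) (hg := by fun_prop)
        (hf0 := by simp [hg0]) (hg0 := by simp [hg0]),
        cfcₙ_sub (fun t : ℝ => t) (fun t => t * g t) b (hf := continuousOn_id)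
          (hg := by fun_prop) (hf0 := rfl) (hg0 := by simp [hg0]),
        cfcₙ_sub (fun t : ℝ => g t * t) (fun t => g t * (t * g t)) b (hf := by fun_prop)
          (hg := by fun_prop) (hf0 := by simp [hg0]) (hg0 := by simp [hg0]),
        cfcₙ_id' ℝ b, ← h1, ← h2, ← h3]
    have hbound : ∀ t : ℝ, |t * (1 - g t) ^ 2| ≤ s / 2 := by
      intro t
      have h4 : 1 - g t = δ / (t ^ 2 + δ) := by
        field_simp [hg_def]
        show (1 - t ^ 2 / (t ^ 2 + δ)) * (t ^ 2 + δ) = δ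
        rw [sub_mul, div_mul_cancel₀ _ (hpos t).ne']
        ring
      have h7 : |1 - g t| = δ / (t ^ 2 + δ) := by
        rw [h4, abs_of_pos (by positivity)]
      rw [abs_mul, abs_pow, h7, div_pow, mul_div_assoc']
      rw [div_le_iff₀ (by positivity), hδ_def]
      exact real_bound_aux' hs t |t| rfl
    have hnorm2 : ‖x - x * e‖ * ‖x - x * e‖ ≤ s / 2 := by
      rw [← CStarRing.norm_star_mul_self, hc2]
      exact norm_cfcₙ_le fun t _ => (by rw [Real.norm_eq_abs]; exact hbound t)
    exact hnorm2
  · -- contraction property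
    intro a
    have hone : ‖(1 - ((e : A) : Unitization ℂ A))‖ ≤ 1 := by
      rw [he_def, Unitization.real_cfcₙ_eq_cfc_inr b g hg0]
      have hb' : IsSelfAdjoint (b : Unitization ℂ A) := Unitization.isSelfAdjoint_inr.mpr hb
      have : 1 - cfc g (b : Unitization ℂ A) = cfc (fun t : ℝ => 1 - g t) (b : Unitization ℂ A) := by
        rw [cfc_sub _ _ _ continuousOn_const hgc.continuousOn, cfc_const_one ℝ _]
      rw [this]
      refine norm_cfc_le zero_le_one fun t _ => ?_
      rw [Real.norm_eq_abs, abs_le]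
      constructor <;> linarith [(hgrange t).1, (hgrange t).2]
    rw [← Unitization.norm_inr (𝕜 := ℂ) (a - a * e)]
    have h2 : ((a - a * e : A) : Unitization ℂ A) = (a : Unitization ℂ A) * (1 - e) := by
      rw [Unitization.inr_sub, Unitization.inr_mul, mul_sub, mul_one]
    rw [h2]
    calc ‖(a : Unitization ℂ A) * (1 - e)‖
        ≤ ‖(a : Unitization ℂ A)‖ * ‖(1 - ((e : A) : Unitization ℂ A))‖ := norm_mul_le _ _
      _ ≤ ‖(a : Unitization ℂ A)‖ * 1 := by gcongr
      _ = ‖a‖ := by rw [mul_one, Unitization.norm_inr]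

lemma my_key_approx {x : A} {ε : ℝ} (hε : 0 < ε) :
    ∃ e : A, (∃ c : A, e = (star x * x) * c) ∧ ‖x - x * e‖ < ε ∧ ∀ a : A, ‖a - a * e‖ ≤ ‖a‖ := by
  obtain ⟨e, hc, hsmall, hcontr⟩ := my_key_approx_aux (x := x) (s := ε ^ 2) (by positivity)
  refine ⟨e, hc, ?_, hcontr⟩
  nlinarith [norm_nonneg (x - x * e)]


lemma ClosedIdeal.sub_mem' {A : Type*} [NonUnitalNormedRing A] [Module ℂ A]
    (I : ClosedIdeal A) {x y : A} (hx : x ∈ I.carrier) (hy : y ∈ I.carrier) :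
    x - y ∈ I.carrier := by
  rw [sub_eq_add_neg, ← neg_one_smul ℂ y]
  exact I.add_mem' hx (I.smul_mem' _ hy)

lemma exists_approx_inter (I J : ClosedIdeal A)
    {x y : A} (hx : x ∈ I.carrier) (hy : y ∈ J.carrier) {ε : ℝ} (hε : 0 < ε) :
    ∃ z, z ∈ I.carrier ∧ z ∈ J.carrier ∧ ‖y - z‖ ≤ ‖x + y‖ + ε := by
  obtain ⟨e, ⟨c, hec⟩, hsmall, hcontr⟩ := my_key_approx (x := x) hε
  have heI : e ∈ I.carrier := by
    rw [hec]; exact I.mul_mem_right' c (I.mul_mem_left' (star x) hx)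
  refine ⟨y * e, I.mul_mem_left' y heI, J.mul_mem_right' e hy, ?_⟩
  have hkey : y - y * e = ((x + y) - (x + y) * e) - (x - x * e) := by
    rw [add_mul]; abel
  calc ‖y - y * e‖ = ‖((x + y) - (x + y) * e) - (x - x * e)‖ := by rw [hkey]
    _ ≤ ‖(x + y) - (x + y) * e‖ + ‖x - x * e‖ := norm_sub_le _ _
    _ ≤ ‖x + y‖ + ε := add_le_add (hcontr (x + y)) hsmall.le

lemma isClosed_sum_carrier (I J : ClosedIdeal A) :
    IsClosed {t : A | ∃ y ∈ I.carrier, ∃ z ∈ J.carrier, t = y + z} := by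
  refine isClosed_of_closure_subset fun a ha => ?_
  have H : ∀ n : ℕ, ∃ q : A × A, q.1 ∈ I.carrier ∧ q.2 ∈ J.carrier ∧
      ‖a - (q.1 + q.2)‖ < (1/2 : ℝ) ^ n := by
    intro n
    obtain ⟨b, ⟨u, hu, v, hv, rfl⟩, hdist⟩ :=
      Metric.mem_closure_iff.mp ha ((1/2 : ℝ) ^ n) (by positivity)
    exact ⟨(u, v), hu, hv, by rwa [dist_eq_norm] at hdist⟩
  choose q hq1 hq2 hq3 using H
  set xs : ℕ → A := fun n => (q n).1 with hxs
  set ys : ℕ → A := fun n => (q n).2 with hys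
  have H2 : ∀ n : ℕ, ∃ z, z ∈ I.carrier ∧ z ∈ J.carrier ∧
      ‖(ys (n+1) - ys n) - z‖ ≤ 3 * (1/2 : ℝ) ^ n := by
    intro n
    have hxI : xs (n+1) - xs n ∈ I.carrier := I.sub_mem' (hq1 _) (hq1 _)
    have hyJ : ys (n+1) - ys n ∈ J.carrier := J.sub_mem' (hq2 _) (hq2 _)
    obtain ⟨z, hzI, hzJ, hz⟩ := exists_approx_inter I J hxI hyJ
      (ε := (1/2 : ℝ) ^ n) (by positivity)
    refine ⟨z, hzI, hzJ, hz.trans ?_⟩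
    have hkey : (xs (n+1) - xs n) + (ys (n+1) - ys n)
        = (a - (xs n + ys n)) - (a - (xs (n+1) + ys (n+1))) := by abel
    have hb : ‖(xs (n+1) - xs n) + (ys (n+1) - ys n)‖ ≤ (1/2 : ℝ) ^ n + (1/2 : ℝ) ^ (n+1) := by
      rw [hkey]
      exact (norm_sub_le _ _).trans (add_le_add (hq3 n).le (hq3 (n+1)).le)
    have h2 : (1/2 : ℝ) ^ (n+1) ≤ (1/2 : ℝ) ^ n := by
      rw [pow_succ]
      nlinarith [pow_pos (by norm_num : (0:ℝ) < 1/2) n]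
    linarith
  choose zs hz1 hz2 hz3 using H2
  set w : ℕ → A := fun n => ∑ k ∈ Finset.range n, zs k with hw
  have hwmem : ∀ n, w n ∈ I.carrier ∧ w n ∈ J.carrier := by
    intro n
    induction n with
    | zero => exact ⟨by simpa [hw] using I.zero_mem', by simpa [hw] using J.zero_mem'⟩
    | succ n ih =>
      have : w (n+1) = w n + zs n := by simp [hw, Finset.sum_range_succ]
      rw [this]
      exact ⟨I.add_mem' ih.1 (hz1 n), J.add_mem' ih.2 (hz2 n)⟩
  set Y : ℕ → A := fun n => ys n - w n with hY
  have hYJ : ∀ n, Y n ∈ J.carrier := fun n => J.sub_mem' (hq2 n) (hwmem n).2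
  have hYcauchy : CauchySeq Y := by
    apply cauchySeq_of_le_geometric (1/2 : ℝ) 3 (by norm_num)
    intro n
    rw [dist_eq_norm]
    have hdiff : Y n - Y (n+1) = -((ys (n+1) - ys n) - zs n) := by
      simp only [hY, hw, Finset.sum_range_succ]
      abel
    rw [hdiff, norm_neg]
    exact hz3 n
  obtain ⟨L, hL⟩ := cauchySeq_tendsto_of_complete hYcauchy
  have hLJ : L ∈ J.carrier := J.isClosed'.mem_of_tendsto hL (Filter.Eventually.of_forall hYJ)
  have htend : Filter.Tendsto (fun n => xs n + ys n) Filter.atTop (nhds a) := by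
    rw [tendsto_iff_norm_sub_tendsto_zero]
    have hle : ∀ n : ℕ, ‖(xs n + ys n) - a‖ ≤ (1/2 : ℝ) ^ n := fun n => by
      rw [norm_sub_rev]; exact (hq3 n).le
    exact squeeze_zero (fun n => norm_nonneg _) hle
      (tendsto_pow_atTop_nhds_zero_of_lt_one (by norm_num) (by norm_num))
  have hXtend : Filter.Tendsto (fun n => xs n + w n) Filter.atTop (nhds (a - L)) := by
    have hfn : (fun n => xs n + w n) = fun n => (xs n + ys n) - Y n := by
      funext n
      simp only [hY]
      abel
    rw [hfn]
    exact htend.sub hL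
  have hXI : a - L ∈ I.carrier := I.isClosed'.mem_of_tendsto hXtend
    (Filter.Eventually.of_forall fun n => I.add_mem' (hq1 n) (hwmem n).1)
  exact ⟨a - L, hXI, L, hLJ, by abel⟩

/-- The sum of two closed ideals in a C⋆-algebra is a closed ideal. -/
def ClosedIdeal.sum (I J : ClosedIdeal A) : ClosedIdeal A where
  carrier := {t : A | ∃ y ∈ I.carrier, ∃ z ∈ J.carrier, t = y + z}
  zero_mem' := ⟨0, I.zero_mem', 0, J.zero_mem', by simp⟩
  add_mem' := by
    rintro x₁ x₂ ⟨y₁, hy₁, z₁, hz₁, rfl⟩ ⟨y₂, hy₂, z₂, hz₂, rfl⟩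
    exact ⟨y₁ + y₂, I.add_mem' hy₁ hy₂, z₁ + z₂, J.add_mem' hz₁ hz₂, by abel⟩
  smul_mem' := by
    rintro c x ⟨y, hy, z, hz, rfl⟩
    exact ⟨c • y, I.smul_mem' c hy, c • z, J.smul_mem' c hz, by rw [smul_add]⟩
  mul_mem_left' := by
    rintro a x ⟨y, hy, z, hz, rfl⟩
    exact ⟨a * y, I.mul_mem_left' a hy, a * z, J.mul_mem_left' a hz, by rw [mul_add]⟩
  mul_mem_right' := by
    rintro a x ⟨y, hy, z, hz, rfl⟩
    exact ⟨y * a, I.mul_mem_right' a hy, z * a, J.mul_mem_right' a hz, by rw [add_mul]⟩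
  isClosed' := isClosed_sum_carrier I J

end AuxCStar

section GenAux

variable {A : Type*} [NonUnitalNormedRing A] [Module ℂ A]

lemma ClosedIdeal.mem_generated {S : Set A} {x : A} (hx : x ∈ S) :
    x ∈ (ClosedIdeal.generated S).carrier := by
  simp only [ClosedIdeal.generated, Set.mem_iInter]
  exact fun I hI => hI hx

lemma ClosedIdeal.generated_subset {S : Set A} {I : ClosedIdeal A} (h : S ⊆ I.carrier) :
    (ClosedIdeal.generated S).carrier ⊆ I.carrier := by
  intro x hx
  simp only [ClosedIdeal.generated, Set.mem_iInter] at hx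
  exact hx I h

lemma ClosedIdeal.generated_mono {S S' : Set A} (h : S ⊆ S') :
    (ClosedIdeal.generated S).carrier ⊆ (ClosedIdeal.generated S').carrier :=
  ClosedIdeal.generated_subset fun x hx => ClosedIdeal.mem_generated (h hx)

/-- The trivial closed ideal. -/
def ClosedIdeal.bot : ClosedIdeal A where
  carrier := {0}
  zero_mem' := rfl
  add_mem' := by rintro x y rfl rfl; simp
  smul_mem' := by rintro c x rfl; simp
  mul_mem_left' := by rintro a x rfl; simp
  mul_mem_right' := by rintro a x rfl; simp
  isClosed' := isClosed_singleton

end GenAux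

section TensorAux

variable {B D T : Type*} [NonUnitalCStarAlgebra B] [NonUnitalCStarAlgebra D]
  [NonUnitalCStarAlgebra T]

lemma CStarTensor.tensorIdeal_mono (τ : CStarTensor B D T) {I J : ClosedIdeal B}
    (h : I.carrier ⊆ J.carrier) :
    (τ.tensorIdeal I).carrier ⊆ (τ.tensorIdeal J).carrier := by
  apply ClosedIdeal.generated_mono
  rintro t ⟨b, hb, d, rfl⟩
  exact ⟨b, h hb, d, rfl⟩

end TensorAux

/-- If the action of `X` on `B` is finitely upper semicontinuous, so is the induced action
`U ↦ B(U) ⊗ D` on the spatial tensor product `B ⊗ D`. -/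
theorem stmt_3 {X : Type*} [TopologicalSpace X] {B D T : Type*}
    [NonUnitalCStarAlgebra B] [NonUnitalCStarAlgebra D] [NonUnitalCStarAlgebra T]
    (τ : CStarTensor B D T) (α : Opens X → ClosedIdeal B)
    (hmono : ∀ U V : Opens X, U ≤ V → (α U).carrier ⊆ (α V).carrier)
    (hbot : (α ⊥).carrier = {0})
    (hsum : ∀ U V : Opens X, (α (U ⊔ V)).carrier =
      {x : B | ∃ y ∈ (α U).carrier, ∃ z ∈ (α V).carrier, x = y + z}) :
    (τ.tensorIdeal (α ⊥)).carrier = {0} ∧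
      ∀ U V : Opens X, (τ.tensorIdeal (α (U ⊔ V))).carrier =
        {t : T | ∃ y ∈ (τ.tensorIdeal (α U)).carrier,
          ∃ z ∈ (τ.tensorIdeal (α V)).carrier, t = y + z} := by
  constructor
  · apply Set.Subset.antisymm
    · apply ClosedIdeal.generated_subset (I := ClosedIdeal.bot)
      rintro t ⟨b, hb, d, rfl⟩
      rw [hbot] at hb
      rw [hb]
      simp only [ClosedIdeal.bot, map_zero, LinearMap.zero_apply, Set.mem_singleton_iff]
    · rintro t rfl
      exact (τ.tensorIdeal (α ⊥)).zero_mem'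
  · intro U V
    have hUsub : (τ.tensorIdeal (α U)).carrier ⊆ (τ.tensorIdeal (α (U ⊔ V))).carrier :=
      τ.tensorIdeal_mono (hmono U (U ⊔ V) le_sup_left)
    have hVsub : (τ.tensorIdeal (α V)).carrier ⊆ (τ.tensorIdeal (α (U ⊔ V))).carrier :=
      τ.tensorIdeal_mono (hmono V (U ⊔ V) le_sup_right)
    apply Set.Subset.antisymm
    · apply ClosedIdeal.generated_subset
        (I := ClosedIdeal.sum (τ.tensorIdeal (α U)) (τ.tensorIdeal (α V)))
      rintro t ⟨b, hb, d, rfl⟩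
      rw [hsum U V] at hb
      obtain ⟨y, hy, z, hz, rfl⟩ := hb
      refine ⟨τ.ι y d, ?_, τ.ι z d, ?_, ?_⟩
      · exact ClosedIdeal.mem_generated ⟨y, hy, d, rfl⟩
      · exact ClosedIdeal.mem_generated ⟨z, hz, d, rfl⟩
      · rw [map_add, LinearMap.add_apply]
    · rintro t ⟨y, hy, z, hz, rfl⟩
      exact (τ.tensorIdeal (α (U ⊔ V))).add_mem' (hUsub hy) (hVsub hz)
end
end
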